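/- Let w be a recurrent right-infinite word of linear factor complexity, and let v be a recurrent word with Fac(v) ⊊ Fac(w). Then limsup_{n→∞} p_v(n)/n ≤ (limsup_{n→∞} p_w(n)/n) − 1. -/

import Mathlib

/-- The factor of `w` of length `n` starting at position `i`. -/
def factorAt {A : Type*} (w : ℕ → A) (i n : ℕ) : List A :=
  (List.range n).map (fun k => w (i + k))

/-- `u` is a (finite, contiguous) factor of the right-infinite word `w`. -/
def IsFactorOf {A : Type*} (u : List A) (w : ℕ → A) : Prop :=
  ∃ i, u = factorAt w i u.length

/-- The set of factors of `w`. -/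
def Fac {A : Type*} (w : ℕ → A) : Set (List A) := {u | IsFactorOf u w}

/-- `w` is recurrent: every factor occurs at arbitrarily large positions. -/
def Recurrent {A : Type*} (w : ℕ → A) : Prop :=
  ∀ u ∈ Fac w, ∀ N : ℕ, ∃ i ≥ N, u = factorAt w i u.length

/-- `w` is uniformly recurrent: each factor occurs in every sufficiently long factor. -/
def UniformlyRecurrent {A : Type*} (w : ℕ → A) : Prop :=
  ∀ u ∈ Fac w, ∃ N : ℕ, ∀ y ∈ Fac w, y.length = N → u <:+: y

/-- `w` is (purely) periodic. -/
def PeriodicWord {A : Type*} (w : ℕ → A) : Prop :=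
  ∃ p ≥ 1, ∀ n, w (n + p) = w n

/-- `w` is eventually periodic. -/
def EventuallyPeriodicWord {A : Type*} (w : ℕ → A) : Prop :=
  ∃ p ≥ 1, ∃ N, ∀ n ≥ N, w (n + p) = w n

/-- The factor complexity function of `w`. -/
noncomputable def cplx {A : Type*} (w : ℕ → A) (n : ℕ) : ℕ :=
  Set.ncard {u | u ∈ Fac w ∧ u.length = n}

/-- A set of finite words is factor-closed. -/
def FactorClosed {A : Type*} (S : Set (List A)) : Prop :=
  ∀ y ∈ S, ∀ u, u <:+: y → u ∈ S

/-- The radical of `w`. -/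
def Rad {A : Type*} (w : ℕ → A) : Set (List A) :=
  {z | z ∈ Fac w ∧ ∀ Y : Finset (List A),
    (∀ y ∈ Y, y ∈ Fac w ∧ z <:+: y) →
    ∃ N : ℕ, ∀ L : List (List A), L.length = N → (∀ y ∈ L, y ∈ Y) →
      L.flatten ∉ Fac w}

/-- The recurrent spectrum of `w`, with classes identified with their factor sets. -/
def RecSpec {A : Type*} (w : ℕ → A) : Set (Set (List A)) :=
  {F | ∃ v : ℕ → A, Recurrent v ∧ F = Fac v ∧ Fac v ⊆ Fac w}

section helpers
variable {A : Type*} {w : ℕ → A}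

lemma factorAt_length (i n : ℕ) : (factorAt w i n).length = n := by simp [factorAt]

lemma factorAt_take {j n : ℕ} (h : j ≤ n) (i : ℕ) :
    (factorAt w i n).take j = factorAt w i j := by
  apply List.ext_getElem
  · simp [factorAt]; omega
  · intro k h1 h2
    simp [factorAt]

lemma factorAt_drop (j n i : ℕ) :
    (factorAt w i n).drop j = factorAt w (i + j) (n - j) := by
  apply List.ext_getElem
  · simp [factorAt]
  · intro k h1 h2
    simp [factorAt]
    congr 1
    omega

lemma factorAt_sub {j len n i : ℕ} (h : j + len ≤ n) :
    ((factorAt w i n).drop j).take len = factorAt w (i + j) len := by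
  rw [factorAt_drop, factorAt_take (by omega)]

lemma factorAt_infix {j len n : ℕ} (i : ℕ) (h : j + len ≤ n) :
    factorAt w (i + j) len <:+: factorAt w i n := by
  rw [← factorAt_sub h]
  exact ((List.take_prefix _ _).isInfix).trans ((List.drop_suffix _ _).isInfix)

lemma infix_extract {u : List A} {i n : ℕ} (h : u <:+: factorAt w i n) :
    ∃ j, j + u.length ≤ n ∧ u = factorAt w (i + j) u.length := by
  obtain ⟨s, t, hst⟩ := h
  have hlen : s.length + (u.length + t.length) = n := by
    have := congrArg List.length hst
    simpa [factorAt] using this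
  refine ⟨s.length, by omega, ?_⟩
  have h1 : u = ((s ++ u ++ t).drop s.length).take u.length := by
    rw [List.append_assoc, List.drop_left, List.take_left]
  rw [hst, factorAt_sub (by omega)] at h1
  exact h1

lemma fac_closed {u x : List A} (hx : x ∈ Fac w) (h : u <:+: x) : u ∈ Fac w := by
  obtain ⟨i, hi⟩ := hx
  rw [hi] at h
  obtain ⟨j, _, hu⟩ := infix_extract h
  exact ⟨i + j, hu⟩

lemma factorAt_mem_fac (i n : ℕ) : factorAt w i n ∈ Fac w :=
  ⟨i, by rw [factorAt_length]⟩

end helpers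

lemma key_count {A : Type*} [Finite A] (w v : ℕ → A) (u : List A)
    (HP : ∀ n, ∃ i, n ≤ i ∧ u = factorAt w i u.length ∧
      ∀ t, i - n ≤ t → t < i → u ≠ factorAt w t u.length)
    (hsub : Fac v ⊆ Fac w) (huv : u ∉ Fac v) (n : ℕ) (hn : u.length ≤ n) :
    cplx v n + (n + 1 - u.length) ≤ cplx w n := by
  set m := u.length with hm
  obtain ⟨i, hi, hocc, hforb⟩ := HP n
  set S : Set (List A) := {x | x ∈ Fac w ∧ x.length = n} with hS
  set V : Set (List A) := {x | x ∈ Fac v ∧ x.length = n} with hV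
  set D : Set (List A) := {x | (x ∈ Fac w ∧ x.length = n) ∧ u <:+: x} with hD
  have hSfin : S.Finite := (List.finite_length_eq A n).subset (fun x hx => hx.2)
  have hVS : V ⊆ S := fun x hx => ⟨hsub hx.1, hx.2⟩
  have hDS : D ⊆ S := fun x hx => hx.1
  have hVfin : V.Finite := hSfin.subset hVS
  have hDfin : D.Finite := hSfin.subset hDS
  have hdisj : Disjoint V D := by
    rw [Set.disjoint_left]
    rintro x ⟨hxv, _⟩ ⟨_, hux⟩
    exact huv (fac_closed hxv hux)
  -- lower bound on D
  have hinj : n + 1 - m ≤ D.ncard := by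
    have hmaps : ∀ j ∈ Finset.range (n + 1 - m), factorAt w (i - j) n ∈ hDfin.toFinset := by
      intro j hj
      rw [Finset.mem_range] at hj
      rw [Set.Finite.mem_toFinset]
      refine ⟨⟨factorAt_mem_fac _ _, factorAt_length _ _⟩, ?_⟩
      have hij : i - j + j = i := by omega
      have : u = factorAt w (i - j + j) m := by rw [hij]; exact hocc
      rw [this]
      exact factorAt_infix _ (by omega)
    have hinjOn : Set.InjOn (fun j => factorAt w (i - j) n)
        ↑(Finset.range (n + 1 - m)) := by
      have key : ∀ j j', j < j' → j' < n + 1 - m →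
          factorAt w (i - j) n ≠ factorAt w (i - j') n := by
        intro j j' hjj' hj' heq
        have h1 : ((factorAt w (i - j) n).drop j).take m = factorAt w (i - j + j) m :=
          factorAt_sub (by omega)
        have h2 : ((factorAt w (i - j') n).drop j).take m = factorAt w (i - j' + j) m :=
          factorAt_sub (by omega)
        rw [heq, h2] at h1
        have hij : i - j + j = i := by omega
        rw [hij] at h1
        exact hforb (i - j' + j) (by omega) (by omega) (h1 ▸ hocc)
      intro j hj j' hj' heq
      simp only [Finset.coe_range, Set.mem_Iio] at hj hj'
      by_contra hne
      rcases lt_or_gt_of_ne hne with h | h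
      · exact key j j' h hj' heq
      · exact key j' j h hj heq.symm
    have := Finset.card_le_card_of_injOn _ hmaps hinjOn
    simpa [Set.ncard_eq_toFinset_card D hDfin] using this
  have hcv : cplx v n = V.ncard := rfl
  have hcw : cplx w n = S.ncard := rfl
  rw [hcv, hcw]
  calc V.ncard + (n + 1 - m) ≤ V.ncard + D.ncard := by omega
    _ = (V ∪ D).ncard := (Set.ncard_union_eq hdisj hVfin hDfin).symm
    _ ≤ S.ncard := Set.ncard_le_ncard (Set.union_subset hVS hDS) hSfin

theorem limsup_complexity_drop {A : Type*} [Finite A] (w v : ℕ → A)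
    (hw : Recurrent w) (hlin : ∃ C : ℕ, ∀ n ≥ 1, cplx w n ≤ C * n)
    (hv : Recurrent v) (hsub : Fac v ⊂ Fac w) :
    Filter.atTop.limsup (fun n : ℕ => (cplx v n : ℝ) / n) ≤
      Filter.atTop.limsup (fun n : ℕ => (cplx w n : ℝ) / n) - 1 := by
  obtain ⟨hsub', hne⟩ := hsub
  obtain ⟨u, huw, huv⟩ : ∃ u, u ∈ Fac w ∧ u ∉ Fac v := by
    by_contra h
    push_neg at h
    exact hne (fun x hx => h x hx)
  set m := u.length with hm
  -- Case analysis: isolated occurrences at every scale, or syndetic at some scale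
  by_cases HP : ∀ n, ∃ i, n ≤ i ∧ u = factorAt w i u.length ∧
      ∀ t, i - n ≤ t → t < i → u ≠ factorAt w t u.length
  swap
  · -- syndetic case: every long factor of w contains u; contradiction with Fac v
    exfalso
    push_neg at HP
    obtain ⟨n0, hn0⟩ := HP
    -- chain lemma
    have Q : ∀ i, u = factorAt w i m → ∀ s, s + n0 ≤ i →
        ∃ t, s ≤ t ∧ t ≤ s + n0 ∧ u = factorAt w t m := by
      intro i
      induction i using Nat.strong_induction_on with
      | _ i ih =>
        intro hocc s hs
        rcases eq_or_lt_of_le hs with h | h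
        · exact ⟨i, by omega, by omega, hocc⟩
        · obtain ⟨t, ht1, ht2, htocc⟩ := hn0 i (by omega) hocc
          by_cases hc : t ≤ s + n0
          · exact ⟨t, by omega, hc, htocc⟩
          · exact ih t ht2 htocc s (by omega)
    -- the prefix of v of length n0 + m is a factor of w
    have hx : factorAt v 0 (n0 + m) ∈ Fac w := hsub' (factorAt_mem_fac 0 (n0 + m))
    obtain ⟨s, hsx⟩ := hx
    rw [factorAt_length] at hsx
    obtain ⟨i, hi, hiocc⟩ := hw u huw (s + n0)
    obtain ⟨t, hts, htn, htocc⟩ := Q i hiocc s hi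
    have hinf : u <:+: factorAt w s (n0 + m) := by
      have : u = factorAt w (s + (t - s)) m := by
        have : s + (t - s) = t := by omega
        rw [this]; exact htocc
      rw [this]
      exact factorAt_infix _ (by omega)
    rw [← hsx] at hinf
    exact huv (fac_closed (factorAt_mem_fac 0 (n0 + m)) hinf)
  · -- main case
    have hcount : ∀ n, m ≤ n → cplx v n + (n + 1 - m) ≤ cplx w n :=
      fun n hn => key_count w v u HP hsub' huv n hn
    obtain ⟨C, hC⟩ := hlin
    set f : ℕ → ℝ := fun n => (cplx v n : ℝ) / n with hf
    set g : ℕ → ℝ := fun n => (cplx w n : ℝ) / n with hg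
    have hf0 : ∀ n, 0 ≤ f n := fun n => by positivity
    have hg0 : ∀ n, 0 ≤ g n := fun n => by positivity
    have hgC : ∀ n, 1 ≤ n → g n ≤ C := by
      intro n hn
      have h1 : (cplx w n : ℝ) ≤ C * n := by exact_mod_cast hC n hn
      have h2 : (0:ℝ) < n := by exact_mod_cast hn
      rw [hg, div_le_iff₀ h2]
      linarith
    have hgbdd : Filter.atTop.IsBoundedUnder (· ≤ ·) g :=
      ⟨C, Filter.eventually_atTop.2 ⟨1, hgC⟩⟩
    have hfbdd : Filter.atTop.IsBoundedUnder (· ≤ ·) f := by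
      refine ⟨C, Filter.eventually_atTop.2 ⟨max m 1, fun n hn => ?_⟩⟩
      have h1 := hcount n (le_trans (le_max_left m 1) hn)
      have h2 : cplx v n ≤ cplx w n := by omega
      have h3 : (0:ℝ) < n := by
        have : 1 ≤ n := le_trans (le_max_right m 1) hn
        exact_mod_cast this
      calc f n ≤ g n := by
            show (cplx v n : ℝ) / n ≤ (cplx w n : ℝ) / n
            gcongr
        _ ≤ C := hgC n (le_trans (le_max_right m 1) hn)
    -- main eventual inequality with epsilon
    have key : ∀ ε : ℝ, 0 < ε →
        Filter.atTop.limsup f ≤ Filter.atTop.limsup g - 1 + ε := by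
      intro ε hε
      have htend : Filter.Tendsto (fun n : ℕ => ((m : ℝ) - 1) / n)
          Filter.atTop (nhds 0) := tendsto_const_div_atTop_nhds_zero_nat _
      have hev0 : ∀ᶠ n : ℕ in Filter.atTop, ((m : ℝ) - 1) / n < ε :=
        htend.eventually_lt_const hε
      have hev : ∀ᶠ n : ℕ in Filter.atTop, f n + (1 - ε) ≤ g n := by
        filter_upwards [hev0, Filter.eventually_ge_atTop (max m 1)] with n h0 hn
        have hmn : m ≤ n := le_trans (le_max_left m 1) hn
        have hn1 : 1 ≤ n := le_trans (le_max_right m 1) hn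
        have hnR : (0:ℝ) < n := by exact_mod_cast hn1
        have h1 := hcount n hmn
        have h2 : (cplx v n : ℝ) + ((n:ℝ) + 1 - m) ≤ cplx w n := by
          have hm1 : m ≤ n + 1 := by omega
          have hcast := (Nat.cast_le (α := ℝ)).2 h1
          push_cast [Nat.cast_sub hm1] at hcast
          linarith
        have h3 : f n + ((n:ℝ) + 1 - m) / n ≤ g n := by
          rw [hf, hg, ← add_div, div_le_div_iff₀ hnR hnR]
          nlinarith
        have h4 : 1 - ε ≤ ((n:ℝ) + 1 - m) / n := by
          have : ((n:ℝ) + 1 - m) / n = 1 + (1 - (m:ℝ)) / n := by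
            field_simp
            ring
          rw [this]
          have : -(((m:ℝ) - 1) / n) = (1 - (m:ℝ)) / n := by ring
          linarith [h0, this]
        linarith
      have hfcob : Filter.atTop.IsCoboundedUnder (· ≤ ·) (fun n => f n + (1 - ε)) :=
        Filter.isCoboundedUnder_le_of_le (x := 1 - ε) _ (fun n => by linarith [hf0 n])
      have step : Filter.atTop.limsup (fun n => f n + (1 - ε)) ≤ Filter.atTop.limsup g :=
        Filter.limsup_le_limsup hev hfcob hgbdd
      have shift : Filter.atTop.limsup (fun n => f n + (1 - ε)) =
          Filter.atTop.limsup f + (1 - ε) := by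
        have hiso := (OrderIso.addRight (1 - ε)).limsup_apply (u := f) (f := Filter.atTop)
          hfbdd
          (Filter.isCoboundedUnder_le_of_le (x := 0) _ (fun n => hf0 n))
          (by
            obtain ⟨b, hb⟩ := hfbdd
            refine ⟨b + (1 - ε), Filter.eventually_map.2 ?_⟩
            filter_upwards [Filter.eventually_map.1 hb] with n hn
            simpa using add_le_add_right hn (1 - ε))
          (Filter.isCoboundedUnder_le_of_le (x := 0 + (1 - ε)) _ (fun n => by
            simpa using add_le_add_right (hf0 n) (1 - ε)))
        simpa using hiso.symm
      rw [shift] at step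
      linarith
    by_contra hcon
    push_neg at hcon
    have hε : 0 < (Filter.atTop.limsup f - (Filter.atTop.limsup g - 1)) / 2 := by linarith
    have := key _ hε
    linarith
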